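/- Let G be a finite DAG with vertex partition X, Y, Z such that X and Y are d-separated by Z, and suppose every undirected path from X to Y in G passes through Z in a blocked configuration. If a joint distribution P on finite sets factorizes according to G, then X ⊥ Y | Z holds for P, i.e. P(x,y,z)·P(z) = P(x,z)·P(y,z) for all x,y,z (soundness of d-separation, global Markov property for partitions). -/

import Mathlib

open Classical

/-- Ancestors of a set `W` of vertices: all `u` with a directed path (possibly of
length 0) from `u` to some element of `W`. -/
def An {V : Type} (E : V → V → Prop) (W : Set V) : Set V :=
  {u | ∃ w ∈ W, Relation.ReflTransGen E u w}

/-- Parents of a vertex `v`. -/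
def Pa {V : Type} (E : V → V → Prop) (v : V) : Set V := {u | E u v}

/-- Acyclicity of a directed graph. -/
def IsAcyclicDigraph {V : Type} (E : V → V → Prop) : Prop :=
  ∀ v, ¬ Relation.TransGen E v v

/-- Marginal of a joint distribution `P` on `∏ v, X v` onto the coordinates in `S`,
evaluated at (the `S`-coordinates of) `x`. -/
noncomputable def marg {V : Type} [Fintype V] [DecidableEq V] {X : V → Type}
    [∀ v, Fintype (X v)] (P : (∀ v, X v) → ℝ) (S : Set V) (x : ∀ v, X v) : ℝ :=
  ∑ y : ∀ v, X v, if ∀ v ∈ S, y v = x v then P y else 0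

/-- Conditional independence `A ⊥ B | S` for a finite joint distribution `P`:
`P(a,b,s)·P(s) = P(a,s)·P(b,s)` for all values (phrased via marginals). -/
def CondIndep {V : Type} [Fintype V] [DecidableEq V] {X : V → Type}
    [∀ v, Fintype (X v)] (P : (∀ v, X v) → ℝ) (A B S : Set V) : Prop :=
  ∀ x : ∀ v, X v,
    marg P (A ∪ B ∪ S) x * marg P S x = marg P (A ∪ S) x * marg P (B ∪ S) x

/-- `P` factorizes according to the directed graph `E`: `P(x) = ∏ v K v (x)` for
stochastic kernels `K v` depending only on the coordinate `v` and its parents. -/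
def Factorizes {V : Type} [Fintype V] [DecidableEq V] {X : V → Type}
    [∀ v, Fintype (X v)] (E : V → V → Prop) (P : (∀ v, X v) → ℝ) : Prop :=
  ∃ K : (v : V) → (∀ u, X u) → ℝ,
    (∀ v x, 0 ≤ K v x) ∧
    (∀ v x, ∑ a : X v, K v (Function.update x v a) = 1) ∧
    (∀ v x x', x v = x' v → (∀ u, E u v → x u = x' u) → K v x = K v x') ∧
    (∀ x, P x = ∏ v, K v x)

/-- An undirected walk in the directed graph `E`. -/
def IsUWalk {V : Type} (E : V → V → Prop) (p : List V) : Prop :=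
  p.Chain' fun a b => E a b ∨ E b a

/-- An undirected path `p` is blocked by `Z` (Pearl): it contains a chain or fork
whose middle vertex is in `Z`, or a collider whose middle vertex is not an ancestor
of `Z`. -/
def Blocked {V : Type} (E : V → V → Prop) (Z : Set V) (p : List V) : Prop :=
  ∃ (i : ℕ) (a m b : V), p[i]? = some a ∧ p[i+1]? = some m ∧ p[i+2]? = some b ∧
    ((((E a m ∧ E m b) ∨ (E m a ∧ E b m) ∨ (E m a ∧ E m b)) ∧ m ∈ Z) ∨
      ((E a m ∧ E b m) ∧ m ∉ An E Z))

/-- Classical d-separation: every undirected path between `X` and `Y` is blocked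
by `Z`. -/
def DSep {V : Type} (E : V → V → Prop) (X Y Z : Set V) : Prop :=
  ∀ p : List V, IsUWalk E p → p.Nodup →
    (∃ x ∈ X, p.head? = some x) → (∃ y ∈ Y, p.getLast? = some y) → Blocked E Z p

private lemma sum_split {V : Type} [Fintype V] [DecidableEq V] {X' : V → Type}
    [∀ v, Fintype (X' v)] (Xs Ys Zs : Set V)
    (hXY : Disjoint Xs Ys) (hcover : Xs ∪ Ys ∪ Zs = Set.univ)
    (f g : (∀ v, X' v) → ℝ)
    (hf : ∀ a b : ∀ v, X' v, (∀ v ∈ Xs ∪ Zs, a v = b v) → f a = f b)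
    (hg : ∀ a b : ∀ v, X' v, (∀ v ∈ Ys ∪ Zs, a v = b v) → g a = g b)
    (x : ∀ v, X' v) :
    (∑ y : ∀ v, X' v, if ∀ v ∈ Zs, y v = x v then f y * g y else 0)
      = (∑ y : ∀ v, X' v, if ∀ v ∈ Ys ∪ Zs, y v = x v then f y else 0) *
        (∑ y : ∀ v, X' v, if ∀ v ∈ Xs ∪ Zs, y v = x v then g y else 0) := by
  classical
  have hmem : ∀ v : V, v ∈ Xs ∨ v ∈ Ys ∨ v ∈ Zs := by
    intro v
    have : v ∈ Xs ∪ Ys ∪ Zs := hcover ▸ Set.mem_univ v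
    simpa [Set.mem_union, or_assoc] using this
  have hdisj : ∀ v, v ∈ Xs → v ∉ Ys := fun v hv hv' => hXY.ne_of_mem hv hv' rfl
  rw [← Finset.sum_filter, ← Finset.sum_filter, ← Finset.sum_filter,
    Finset.sum_mul_sum, ← Finset.sum_product']
  refine Finset.sum_bij'
    (fun y _ => ((fun v => if v ∈ Xs then y v else x v),
      (fun v => if v ∈ Ys then y v else x v)))
    (fun p _ => fun v => if v ∈ Xs then p.1 v else p.2 v) ?_ ?_ ?_ ?_ ?_
  · intro y hy
    simp only [Finset.mem_filter, Finset.mem_univ, true_and] at hy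
    simp only [Finset.mem_product, Finset.mem_filter, Finset.mem_univ, true_and]
    constructor
    · intro v hv
      rcases hv with hv | hv
      · have hx : v ∉ Xs := fun h => hdisj v h hv
        simp [hx]
      · by_cases hx : v ∈ Xs
        · simp [hx, hy v hv]
        · simp [hx]
    · intro v hv
      rcases hv with hv | hv
      · simp [hdisj v hv]
      · by_cases hyv : v ∈ Ys
        · simp [hyv, hy v hv]
        · simp [hyv]
  · intro p hp
    simp only [Finset.mem_product, Finset.mem_filter, Finset.mem_univ, true_and] at hp
    simp only [Finset.mem_filter, Finset.mem_univ, true_and]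
    intro v hv
    by_cases hx : v ∈ Xs
    · simpa [hx] using hp.1 v (Or.inr hv)
    · simpa [hx] using hp.2 v (Or.inr hv)
  · intro y hy
    simp only [Finset.mem_filter, Finset.mem_univ, true_and] at hy
    funext v
    by_cases hx : v ∈ Xs
    · simp [hx]
    · simp only [hx, if_false]
      by_cases hyv : v ∈ Ys
      · simp [hyv]
      · have hz : v ∈ Zs := by rcases hmem v with h | h | h <;> tauto
        simp [hyv, (hy v hz).symm]
  · intro p hp
    simp only [Finset.mem_product, Finset.mem_filter, Finset.mem_univ, true_and] at hp
    have h1 : (fun v => if v ∈ Xs then (if v ∈ Xs then p.1 v else p.2 v) else x v) = p.1 := by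
      funext v
      by_cases hx : v ∈ Xs
      · simp [hx]
      · have hv : v ∈ Ys ∪ Zs := by rcases hmem v with h | h | h <;> tauto
        simp [hx, (hp.1 v hv).symm]
    have h2 : (fun v => if v ∈ Ys then (if v ∈ Xs then p.1 v else p.2 v) else x v) = p.2 := by
      funext v
      by_cases hyv : v ∈ Ys
      · have hx : v ∉ Xs := fun h => hdisj v h hyv
        simp [hyv, hx]
      · have hv : v ∈ Xs ∪ Zs := by rcases hmem v with h | h | h <;> tauto
        simp [hyv, (hp.2 v hv).symm]
    exact Prod.ext h1 h2
  · intro y hy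
    simp only [Finset.mem_filter, Finset.mem_univ, true_and] at hy
    have hfy : f y = f (fun v => if v ∈ Xs then y v else x v) := by
      apply hf
      intro v hv
      rcases hv with hv | hv
      · simp [hv]
      · by_cases hx : v ∈ Xs
        · simp [hx]
        · simp [hx, (hy v hv).symm]
    have hgy : g y = g (fun v => if v ∈ Ys then y v else x v) := by
      apply hg
      intro v hv
      rcases hv with hv | hv
      · simp [hv]
      · by_cases hyv : v ∈ Ys
        · simp [hyv]
        · simp [hyv, (hy v hv).symm]
    rw [hfy, hgy]

/-- Soundness of d-separation (global Markov property for partitions): if the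
vertices of a finite DAG are partitioned into `X`, `Y`, `Z` with `X` and `Y`
d-separated by `Z` (every undirected path from `X` to `Y` is blocked by `Z`), and a
joint distribution `P` on finite sets factorizes according to the DAG, then
`X ⊥ Y | Z` holds for `P`. -/
theorem dsep_soundness_partition {V : Type} [Fintype V] [DecidableEq V]
    {X' : V → Type} [∀ v, Fintype (X' v)] (E : V → V → Prop)
    (hacyc : IsAcyclicDigraph E)
    (X Y Z : Set V)
    (hXY : Disjoint X Y) (hXZ : Disjoint X Z) (hYZ : Disjoint Y Z)
    (hcover : X ∪ Y ∪ Z = Set.univ)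
    (hsep : DSep E X Y Z)
    (hblock : ∀ p : List V, IsUWalk E p → p.Nodup →
      (∃ x ∈ X, p.head? = some x) → (∃ y ∈ Y, p.getLast? = some y) → Blocked E Z p)
    (P : (∀ v, X' v) → ℝ) (hfac : Factorizes E P) :
    CondIndep P X Y Z := by
  classical
  obtain ⟨K, hK0, hK1, hKloc, hKP⟩ := hfac
  have hmem : ∀ w : V, w ∈ X ∨ w ∈ Y ∨ w ∈ Z := by
    intro w
    have : w ∈ X ∪ Y ∪ Z := hcover ▸ Set.mem_univ w
    simpa [Set.mem_union, or_assoc] using this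
  have hneXY : ∀ {a b : V}, a ∈ X → b ∈ Y → a ≠ b := fun ha hb => hXY.ne_of_mem ha hb
  have hneXZ : ∀ {a b : V}, a ∈ X → b ∈ Z → a ≠ b := fun ha hb => hXZ.ne_of_mem ha hb
  have hneYZ : ∀ {a b : V}, a ∈ Y → b ∈ Z → a ≠ b := fun ha hb => hYZ.ne_of_mem ha hb
  -- Graph lemma 1: no edge from Y into X
  have L1 : ∀ v ∈ X, ∀ u ∈ Y, ¬ E u v := by
    intro v hv u hu hE
    obtain ⟨i, a, m, b, _, _, h3, _⟩ :=
      hblock [v, u] (by exact List.isChain_cons_cons.2 ⟨Or.inr hE, List.isChain_singleton _⟩) (by simp [hneXY hv hu])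
        ⟨v, hv, rfl⟩ ⟨u, hu, by simp⟩
    rcases i with _ | i <;> simp at h3
  -- Graph lemma 1': no edge from X into Y
  have L1' : ∀ v ∈ Y, ∀ u ∈ X, ¬ E u v := by
    intro v hv u hu hE
    obtain ⟨i, a, m, b, _, _, h3, _⟩ :=
      hblock [u, v] (by exact List.isChain_cons_cons.2 ⟨Or.inl hE, List.isChain_singleton _⟩) (by simp [hneXY hu hv])
        ⟨u, hu, rfl⟩ ⟨v, hv, by simp⟩
    rcases i with _ | i <;> simp at h3
  -- Graph lemma 2: no collider in Z with one parent in X and one in Y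
  have L2 : ∀ v ∈ Z, ∀ u ∈ X, ∀ w ∈ Y, E u v → E w v → False := by
    intro v hv u hu w hw hE1 hE2
    obtain ⟨i, a, m, b, h1, h2, h3, hc⟩ :=
      hblock [u, v, w] (by exact List.isChain_cons_cons.2 ⟨Or.inl hE1, List.isChain_cons_cons.2 ⟨Or.inr hE2, List.isChain_singleton _⟩⟩)
        (by simp [hneXZ hu hv, hneXY hu hw, (hneYZ hw hv).symm])
        ⟨u, hu, rfl⟩ ⟨w, hw, by simp⟩
    rcases i with _ | _ | i
    · simp only [List.getElem?_cons_zero, List.getElem?_cons_succ, Option.some.injEq] at h1 h2 h3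
      subst h1; subst h2; subst h3
      rcases hc with ⟨(⟨hA', hB'⟩ | ⟨hA', hB'⟩ | ⟨hA', hB'⟩), _⟩ | ⟨_, hnan⟩
      · exact hacyc v (Relation.TransGen.head hB' (Relation.TransGen.single hE2))
      · exact hacyc v (Relation.TransGen.head hA' (Relation.TransGen.single hE1))
      · exact hacyc v (Relation.TransGen.head hA' (Relation.TransGen.single hE1))
      · exact hnan ⟨v, hv, Relation.ReflTransGen.refl⟩
    · simp at h3
    · simp at h3
  -- Split the product over the two sides
  set A : Set V := {v | v ∈ X ∨ ∃ u, u ∈ X ∧ E u v} with hA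
  set f : (∀ v, X' v) → ℝ := fun y => ∏ v ∈ Finset.univ.filter (fun v => v ∈ A), K v y with hfdef
  set g : (∀ v, X' v) → ℝ := fun y => ∏ v ∈ Finset.univ.filter (fun v => v ∉ A), K v y with hgdef
  have hPfg : ∀ y, P y = f y * g y := by
    intro y
    rw [hKP y, hfdef, hgdef]
    exact (Finset.prod_filter_mul_prod_filter_not Finset.univ (fun v => v ∈ A) (fun v => K v y)).symm
  have hAsub : ∀ v ∈ A, v ∈ X ∪ Z ∧ ∀ u, E u v → u ∈ X ∪ Z := by
    intro v hv
    have hvXZ : v ∈ X ∪ Z := by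
      rcases hv with hvX | ⟨u, huX, hE⟩
      · exact Or.inl hvX
      · rcases hmem v with h | h | h
        · exact Or.inl h
        · exact absurd hE (L1' v h u huX)
        · exact Or.inr h
    refine ⟨hvXZ, ?_⟩
    intro u hE
    rcases hmem u with h | h | h
    · exact Or.inl h
    · exfalso
      rcases hvXZ with hvX | hvZ
      · exact L1 v hvX u h hE
      · rcases hv with hvX | ⟨u', hu'X, hE'⟩
        · exact hneXZ hvX hvZ rfl
        · exact L2 v hvZ u' hu'X u h hE' hE
    · exact Or.inr h
  have hcsub : ∀ v, v ∉ A → v ∈ Y ∪ Z ∧ ∀ u, E u v → u ∈ Y ∪ Z := by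
    intro v hv
    have hvnX : v ∉ X := fun h => hv (Or.inl h)
    constructor
    · rcases hmem v with h | h | h
      · exact absurd h hvnX
      · exact Or.inl h
      · exact Or.inr h
    · intro u hE
      have hunX : u ∉ X := fun h => hv (Or.inr ⟨u, h, hE⟩)
      rcases hmem u with h | h | h
      · exact absurd h hunX
      · exact Or.inl h
      · exact Or.inr h
  have hfloc : ∀ a b : ∀ v, X' v, (∀ v ∈ X ∪ Z, a v = b v) → f a = f b := by
    intro a b hab
    apply Finset.prod_congr rfl
    intro v hv
    rw [Finset.mem_filter] at hv
    obtain ⟨hvXZ, hpa⟩ := hAsub v hv.2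
    exact hKloc v a b (hab v hvXZ) (fun u hu => hab u (hpa u hu))
  have hgloc : ∀ a b : ∀ v, X' v, (∀ v ∈ Y ∪ Z, a v = b v) → g a = g b := by
    intro a b hab
    apply Finset.prod_congr rfl
    intro v hv
    rw [Finset.mem_filter] at hv
    obtain ⟨hvYZ, hpa⟩ := hcsub v hv.2
    exact hKloc v a b (hab v hvYZ) (fun u hu => hab u (hpa u hu))
  -- Now the marginal computations
  intro x
  have h1 : marg P (X ∪ Y ∪ Z) x = P x := by
    rw [marg, show (X ∪ Y ∪ Z : Set V) = Set.univ from hcover]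
    exact (Finset.sum_eq_single x
      (fun y _ hne => if_neg fun h => hne (funext fun v => h v (Set.mem_univ v)))
      (fun h => absurd (Finset.mem_univ x) h)).trans (if_pos fun v _ => rfl)
  have h2 : marg P Z x =
      (∑ y : ∀ v, X' v, if ∀ v ∈ Y ∪ Z, y v = x v then f y else 0) *
      (∑ y : ∀ v, X' v, if ∀ v ∈ X ∪ Z, y v = x v then g y else 0) := by
    rw [marg]
    simp only [hPfg]
    exact sum_split X Y Z hXY hcover f g hfloc hgloc x
  have h3 : marg P (X ∪ Z) x =
      f x * (∑ y : ∀ v, X' v, if ∀ v ∈ X ∪ Z, y v = x v then g y else 0) := by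
    rw [marg, Finset.mul_sum]
    apply Finset.sum_congr rfl
    intro y _
    by_cases hc : ∀ v ∈ X ∪ Z, y v = x v
    · rw [if_pos hc, if_pos hc, hPfg y, hfloc y x hc]
    · rw [if_neg hc, if_neg hc, mul_zero]
  have h4 : marg P (Y ∪ Z) x =
      g x * (∑ y : ∀ v, X' v, if ∀ v ∈ Y ∪ Z, y v = x v then f y else 0) := by
    rw [marg, Finset.mul_sum]
    apply Finset.sum_congr rfl
    intro y _
    by_cases hc : ∀ v ∈ Y ∪ Z, y v = x v
    · rw [if_pos hc, if_pos hc, hPfg y, hgloc y x hc]; ring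
    · rw [if_neg hc, if_neg hc, mul_zero]
  rw [h1, h2, h3, h4, hPfg x]
  ring
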